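/- Let G be a graph on n vertices and N an integer with N ≥ max{n, 3}. If G is an induced subgraph of some graph in 𝒢_{N+1}, then G is an induced subgraph of some graph in 𝒢_N. -/

import Mathlib

/-- A homogeneous set of a finite simple graph: a set `X` of vertices with
`2 ≤ |X| < |V|` such that every vertex outside `X` is complete or anticomplete to `X`. -/
def IsHomogeneousSet {V : Type*} [Fintype V] (G : SimpleGraph V) (X : Finset V) : Prop :=
  2 ≤ X.card ∧ X.card < Fintype.card V ∧
    ∀ v ∉ X, (∀ x ∈ X, G.Adj v x) ∨ (∀ x ∈ X, ¬ G.Adj v x)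

/-- A graph is prime if it has no homogeneous set. -/
def IsPrimeGraph {V : Type*} [Fintype V] (G : SimpleGraph V) : Prop :=
  ¬ ∃ X : Finset V, IsHomogeneousSet G X

/-- The 1-subdivision of the star `K_{1,n}`: center `none`, subdivision vertices
`some (inl i)`, leaves `some (inr i)`. -/
def subdivStar (n : ℕ) : SimpleGraph (Option (Fin n ⊕ Fin n)) :=
  SimpleGraph.fromRel fun a b =>
    match a, b with
    | none, some (Sum.inl _) => True
    | some (Sum.inl i), some (Sum.inr j) => i = j
    | _, _ => False

/-- The line graph of `K_{2,n}`: vertices are the edges `(a, j)` of `K_{2,n}`,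
adjacent iff they share an endpoint. -/
def lineK2 (n : ℕ) : SimpleGraph (Fin 2 × Fin n) :=
  SimpleGraph.fromRel fun a b => a.1 = b.1 ∨ a.2 = b.2

/-- The thin spider with `n` legs: vertices `v_i = inl i`, `u_i = inr i`;
edges `v_i u_i` and `u_i u_j` for `i ≠ j`. -/
def thinSpider (n : ℕ) : SimpleGraph (Fin n ⊕ Fin n) :=
  SimpleGraph.fromRel fun a b =>
    match a, b with
    | Sum.inl i, Sum.inr j => i = j
    | Sum.inr _, Sum.inr _ => True
    | _, _ => False

/-- The half-graph of height `n`: vertices `v_i = inl i`, `u_j = inr j`;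
edges `v_i u_j` for `i ≤ j`. -/
def halfGraph (n : ℕ) : SimpleGraph (Fin n ⊕ Fin n) :=
  SimpleGraph.fromRel fun a b =>
    match a, b with
    | Sum.inl i, Sum.inr j => i ≤ j
    | _, _ => False

/-- The graph `H'_{n,I}`: apex `w = none` adjacent to all `v_i`, plus
edges `v_i u_j` for `i ≤ j` and all `u_i u_j`. -/
def HPrimeG (n : ℕ) : SimpleGraph (Option (Fin n ⊕ Fin n)) :=
  SimpleGraph.fromRel fun a b =>
    match a, b with
    | none, some (Sum.inl _) => True
    | some (Sum.inl i), some (Sum.inr j) => i ≤ j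
    | some (Sum.inr _), some (Sum.inr _) => True
    | _, _ => False

/-- The graph `H*_n`: apex `w = none` adjacent only to `v_1`, plus
edges `v_i u_j` for `i ≤ j` and all `u_i u_j`. -/
def HStarG (n : ℕ) : SimpleGraph (Option (Fin n ⊕ Fin n)) :=
  SimpleGraph.fromRel fun a b =>
    match a, b with
    | none, some (Sum.inl i) => (i : ℕ) = 0
    | some (Sum.inl i), some (Sum.inr j) => i ≤ j
    | some (Sum.inr _), some (Sum.inr _) => True
    | _, _ => False

/-- `G` is an induced subgraph of some graph in the family `𝒢_m` of unavoidable
prime graphs: the 1-subdivision of `K_{1,m}` and its complement, the line graph of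
`K_{2,m}` and its complement, the thin spider with `m` legs and its complement, the
half-graph of height `m`, the graph `H'_{m,I}`, and the graph `H*_m` and its complement. -/
def MemGInduced (m : ℕ) {V : Type*} (G : SimpleGraph V) : Prop :=
  Nonempty (G ↪g subdivStar m) ∨ Nonempty (G ↪g (subdivStar m)ᶜ) ∨
  Nonempty (G ↪g lineK2 m) ∨ Nonempty (G ↪g (lineK2 m)ᶜ) ∨
  Nonempty (G ↪g thinSpider m) ∨ Nonempty (G ↪g (thinSpider m)ᶜ) ∨
  Nonempty (G ↪g halfGraph m) ∨
  Nonempty (G ↪g HPrimeG m) ∨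
  Nonempty (G ↪g HStarG m) ∨ Nonempty (G ↪g (HStarG m)ᶜ)

section StepDownAux

open Fin

/-- Factor an embedding through another embedding whose range contains the image. -/
lemma embed_of_exists {V W W' : Type*} {G : SimpleGraph V} {H : SimpleGraph W}
    {H' : SimpleGraph W'} (ι : H ↪g H') (φ : G ↪g H')
    (h : ∀ v, ∃ x, ι x = φ v) : Nonempty (G ↪g H) := by
  choose ψ hψ using h
  refine ⟨⟨⟨ψ, fun a b hab => φ.injective ?_⟩, @fun a b => ?_⟩⟩
  · rw [← hψ a, ← hψ b]; exact congrArg ι hab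
  · show H.Adj (ψ a) (ψ b) ↔ G.Adj a b
    rw [← φ.map_adj_iff, ← hψ a, ← hψ b, ι.map_adj_iff]

/-- Complement of a graph embedding. -/
def embCompl {W W' : Type*} {H : SimpleGraph W} {H' : SimpleGraph W'} (f : H ↪g H') :
    Hᶜ ↪g H'ᶜ :=
  ⟨f.toEmbedding, @fun a b => by
    show H'ᶜ.Adj (f a) (f b) ↔ Hᶜ.Adj a b
    simp [SimpleGraph.compl_adj, f.map_adj_iff, f.injective.ne_iff]⟩

@[simp] lemma embCompl_apply {W W' : Type*} {H : SimpleGraph W} {H' : SimpleGraph W'}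
    (f : H ↪g H') (x : W) : embCompl f x = f x := rfl

/-- If `V` has fewer than `m` elements, some index is missed. -/
lemma exists_missed {V : Type*} [Fintype V] {m : ℕ} (f : V → Option (Fin m))
    (h : Fintype.card V < m) : ∃ i : Fin m, ∀ v, f v ≠ some i := by
  by_contra hc
  push_neg at hc
  choose g hg using hc
  have hginj : Function.Injective g := fun i j hij => by
    have := (hg i).symm.trans (hij ▸ hg j)
    exact Option.some_injective _ this
  have := Fintype.card_le_of_injective g hginj
  simp only [Fintype.card_fin] at this
  omega

/-- If moreover some vertex maps to `none`, a nonzero index is missed. -/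
lemma exists_missed_ne {V : Type*} [Fintype V] {m : ℕ} (f : V → Option (Fin (m + 1)))
    (h : Fintype.card V ≤ m) (hnone : ∃ v, f v = none) :
    ∃ i : Fin (m + 1), i ≠ 0 ∧ ∀ v, f v ≠ some i := by
  by_contra hc
  push_neg at hc
  have hall : ∀ i : Fin m, ∃ v, f v = some i.succ := fun i => hc i.succ (Fin.succ_ne_zero i)
  choose g hg using hall
  obtain ⟨v0, hv0⟩ := hnone
  set F : Fin (m + 1) → V := Fin.cases v0 g with hF
  have hFinj : Function.Injective F := by
    intro a b hab
    rcases Fin.eq_zero_or_eq_succ a with rfl | ⟨a', rfl⟩ <;>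
        rcases Fin.eq_zero_or_eq_succ b with rfl | ⟨b', rfl⟩ <;>
        simp only [hF, Fin.cases_zero, Fin.cases_succ] at hab
    · rfl
    · have := hg b'; rw [← hab, hv0] at this; cases this
    · have := hg a'; rw [hab, hv0] at this; cases this
    · have := hg a'
      rw [hab, hg b', Option.some_inj, Fin.succ_inj] at this
      rw [this]
  have := Fintype.card_le_of_injective F hFinj
  simp only [Fintype.card_fin] at this
  omega

/-- Index of a vertex in an `Option (Fin m ⊕ Fin m)` graph. -/
def oidx {m : ℕ} : Option (Fin m ⊕ Fin m) → Option (Fin m) :=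
  Option.map (Sum.elim id id)

def omap {m : ℕ} (i : Fin (m + 1)) : Option (Fin m ⊕ Fin m) → Option (Fin (m + 1) ⊕ Fin (m + 1)) :=
  Option.map (Sum.map i.succAbove i.succAbove)

lemma omap_injective {m : ℕ} (i : Fin (m + 1)) : Function.Injective (omap i) :=
  Option.map_injective (Sum.map_injective.mpr
    ⟨Fin.succAbove_right_injective, Fin.succAbove_right_injective⟩)

lemma omap_surjOn {m : ℕ} (i : Fin (m + 1)) (w : Option (Fin (m + 1) ⊕ Fin (m + 1)))
    (h : oidx w ≠ some i) : ∃ x, omap i x = w := by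
  match w with
  | none => exact ⟨none, rfl⟩
  | some (Sum.inl j) =>
    obtain ⟨k, hk⟩ := Fin.exists_succAbove_eq (by simpa [oidx] using h)
    exact ⟨some (Sum.inl k), by simp [omap, hk]⟩
  | some (Sum.inr j) =>
    obtain ⟨k, hk⟩ := Fin.exists_succAbove_eq (by simpa [oidx] using h)
    exact ⟨some (Sum.inr k), by simp [omap, hk]⟩

def sidx {m : ℕ} : Fin m ⊕ Fin m → Option (Fin m) := fun x => some (Sum.elim id id x)

def smap {m : ℕ} (i : Fin (m + 1)) : Fin m ⊕ Fin m → Fin (m + 1) ⊕ Fin (m + 1) :=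
  Sum.map i.succAbove i.succAbove

lemma smap_injective {m : ℕ} (i : Fin (m + 1)) : Function.Injective (smap i) :=
  Sum.map_injective.mpr ⟨Fin.succAbove_right_injective, Fin.succAbove_right_injective⟩

lemma smap_surjOn {m : ℕ} (i : Fin (m + 1)) (w : Fin (m + 1) ⊕ Fin (m + 1))
    (h : sidx w ≠ some i) : ∃ x, smap i x = w := by
  match w with
  | Sum.inl j =>
    obtain ⟨k, hk⟩ := Fin.exists_succAbove_eq (by simpa [sidx] using h)
    exact ⟨Sum.inl k, by simp [smap, hk]⟩
  | Sum.inr j =>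
    obtain ⟨k, hk⟩ := Fin.exists_succAbove_eq (by simpa [sidx] using h)
    exact ⟨Sum.inr k, by simp [smap, hk]⟩

def pidx {m : ℕ} : Fin 2 × Fin m → Option (Fin m) := fun p => some p.2

def pmap' {m : ℕ} (i : Fin (m + 1)) : Fin 2 × Fin m → Fin 2 × Fin (m + 1) :=
  fun p => (p.1, i.succAbove p.2)

lemma pmap'_injective {m : ℕ} (i : Fin (m + 1)) : Function.Injective (pmap' i) := by
  intro a b hab
  simp only [pmap', Prod.mk.injEq] at hab
  exact Prod.ext hab.1 (Fin.succAbove_right_injective hab.2)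

lemma pmap'_surjOn {m : ℕ} (i : Fin (m + 1)) (w : Fin 2 × Fin (m + 1))
    (h : pidx w ≠ some i) : ∃ x, pmap' i x = w := by
  obtain ⟨k, hk⟩ := Fin.exists_succAbove_eq (x := w.2) (by simpa [pidx] using h)
  exact ⟨(w.1, k), by simp [pmap', hk]⟩

/-- The apex-free part of `HStarG`: half-graph plus a clique on the `u` side. -/
def HG (n : ℕ) : SimpleGraph (Fin n ⊕ Fin n) :=
  SimpleGraph.fromRel fun a b =>
    match a, b with
    | Sum.inl i, Sum.inr j => i ≤ j
    | Sum.inr _, Sum.inr _ => True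
    | _, _ => False

def subdivStarEmb (m : ℕ) (i : Fin (m + 1)) : subdivStar m ↪g subdivStar (m + 1) :=
  ⟨⟨omap i, omap_injective i⟩, @fun a b => by
    show (subdivStar (m + 1)).Adj (omap i a) (omap i b) ↔ (subdivStar m).Adj a b
    rcases a with _ | (a | a) <;> rcases b with _ | (b | b) <;>
      simp [subdivStar, SimpleGraph.fromRel_adj, omap, Fin.succAbove_right_inj,
        (Fin.succAbove_right_injective (p := i)).ne_iff]⟩

def lineK2Emb (m : ℕ) (i : Fin (m + 1)) : lineK2 m ↪g lineK2 (m + 1) :=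
  ⟨⟨pmap' i, pmap'_injective i⟩, @fun a b => by
    show (lineK2 (m + 1)).Adj (pmap' i a) (pmap' i b) ↔ (lineK2 m).Adj a b
    obtain ⟨a1, a2⟩ := a; obtain ⟨b1, b2⟩ := b
    simp [lineK2, SimpleGraph.fromRel_adj, pmap', Prod.ext_iff, Fin.succAbove_right_inj]⟩

def thinSpiderEmb (m : ℕ) (i : Fin (m + 1)) : thinSpider m ↪g thinSpider (m + 1) :=
  ⟨⟨smap i, smap_injective i⟩, @fun a b => by
    show (thinSpider (m + 1)).Adj (smap i a) (smap i b) ↔ (thinSpider m).Adj a b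
    rcases a with a | a <;> rcases b with b | b <;>
      simp [thinSpider, SimpleGraph.fromRel_adj, smap, Fin.succAbove_right_inj,
        (Fin.succAbove_right_injective (p := i)).ne_iff]⟩

def halfGraphEmb (m : ℕ) (i : Fin (m + 1)) : halfGraph m ↪g halfGraph (m + 1) :=
  ⟨⟨smap i, smap_injective i⟩, @fun a b => by
    show (halfGraph (m + 1)).Adj (smap i a) (smap i b) ↔ (halfGraph m).Adj a b
    rcases a with a | a <;> rcases b with b | b <;>
      simp [halfGraph, SimpleGraph.fromRel_adj, smap, Fin.succAbove_le_succAbove_iff,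
        (Fin.succAbove_right_injective (p := i)).ne_iff]⟩

def HPrimeGEmb (m : ℕ) (i : Fin (m + 1)) : HPrimeG m ↪g HPrimeG (m + 1) :=
  ⟨⟨omap i, omap_injective i⟩, @fun a b => by
    show (HPrimeG (m + 1)).Adj (omap i a) (omap i b) ↔ (HPrimeG m).Adj a b
    rcases a with _ | (a | a) <;> rcases b with _ | (b | b) <;>
      simp [HPrimeG, SimpleGraph.fromRel_adj, omap, Fin.succAbove_le_succAbove_iff,
        (Fin.succAbove_right_injective (p := i)).ne_iff]⟩

def HGEmb (m : ℕ) (i : Fin (m + 1)) : HG m ↪g HG (m + 1) :=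
  ⟨⟨smap i, smap_injective i⟩, @fun a b => by
    show (HG (m + 1)).Adj (smap i a) (smap i b) ↔ (HG m).Adj a b
    rcases a with a | a <;> rcases b with b | b <;>
      simp [HG, SimpleGraph.fromRel_adj, smap, Fin.succAbove_le_succAbove_iff,
        (Fin.succAbove_right_injective (p := i)).ne_iff]⟩

def HGtoHStar (m : ℕ) : HG m ↪g HStarG m :=
  ⟨⟨some, Option.some_injective _⟩, @fun a b => by
    show (HStarG m).Adj (some a) (some b) ↔ (HG m).Adj a b
    rcases a with a | a <;> rcases b with b | b <;>
      simp [HStarG, HG, SimpleGraph.fromRel_adj]⟩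

def HStarGEmb (m : ℕ) (hm : 0 < m) (i : Fin (m + 1)) (hi : i ≠ 0) :
    HStarG m ↪g HStarG (m + 1) :=
  haveI : NeZero m := ⟨hm.ne'⟩
  ⟨⟨omap i, omap_injective i⟩, @fun a b => by
    show (HStarG (m + 1)).Adj (omap i a) (omap i b) ↔ (HStarG m).Adj a b
    have hz : ∀ j : Fin m, ((i.succAbove j : Fin (m + 1)) : ℕ) = 0 ↔ (j : ℕ) = 0 := by
      intro j
      rw [show ((i.succAbove j : Fin (m + 1)) : ℕ) = 0 ↔ i.succAbove j = 0 from
        ⟨fun h => Fin.ext h, fun h => by rw [h]; rfl⟩, Fin.succAbove_eq_zero_iff hi]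
      exact ⟨fun h => by rw [h]; rfl, fun h => Fin.ext h⟩
    rcases a with _ | (a | a) <;> rcases b with _ | (b | b) <;>
      simp [HStarG, SimpleGraph.fromRel_adj, omap, Fin.succAbove_le_succAbove_iff, hz,
          Fin.succAbove_eq_zero_iff hi,
        (Fin.succAbove_right_injective (p := i)).ne_iff]⟩

end StepDownAux

/-- If `G` has `n` vertices, `N ≥ max{n,3}`, and `G` is an induced subgraph of some
graph in `𝒢_{N+1}`, then `G` is an induced subgraph of some graph in `𝒢_N`. -/

theorem mem_G_step_down {V : Type*} [Fintype V] (G : SimpleGraph V) (n N : ℕ)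
    (hn : Fintype.card V = n) (hN : max n 3 ≤ N)
    (h : MemGInduced (N + 1) G) : MemGInduced N G := by
  have hnN : n ≤ N := le_trans (le_max_left _ _) hN
  have h3N : 3 ≤ N := le_trans (le_max_right _ _) hN
  have hcard : Fintype.card V < N + 1 := by omega
  have hcard' : Fintype.card V ≤ N := by omega
  unfold MemGInduced at h ⊢
  rcases h with h | h | h | h | h | h | h | h | h | h <;> obtain ⟨φ⟩ := h
  · obtain ⟨i, hi⟩ := exists_missed (fun v => oidx (φ v)) hcard
    exact Or.inl (embed_of_exists (subdivStarEmb N i) φ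
      (fun v => omap_surjOn i (φ v) (hi v)))
  · obtain ⟨i, hi⟩ := exists_missed (fun v => oidx (φ v)) hcard
    exact Or.inr (Or.inl (embed_of_exists (embCompl (subdivStarEmb N i)) φ
      (fun v => omap_surjOn i (φ v) (hi v))))
  · obtain ⟨i, hi⟩ := exists_missed (fun v => pidx (φ v)) hcard
    exact Or.inr (Or.inr (Or.inl (embed_of_exists (lineK2Emb N i) φ
      (fun v => pmap'_surjOn i (φ v) (hi v)))))
  · obtain ⟨i, hi⟩ := exists_missed (fun v => pidx (φ v)) hcard
    exact Or.inr (Or.inr (Or.inr (Or.inl (embed_of_exists (embCompl (lineK2Emb N i)) φ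
      (fun v => pmap'_surjOn i (φ v) (hi v))))))
  · obtain ⟨i, hi⟩ := exists_missed (fun v => sidx (φ v)) hcard
    exact Or.inr (Or.inr (Or.inr (Or.inr (Or.inl (embed_of_exists (thinSpiderEmb N i) φ
      (fun v => smap_surjOn i (φ v) (hi v)))))))
  · obtain ⟨i, hi⟩ := exists_missed (fun v => sidx (φ v)) hcard
    exact Or.inr (Or.inr (Or.inr (Or.inr (Or.inr (Or.inl
      (embed_of_exists (embCompl (thinSpiderEmb N i)) φ
        (fun v => smap_surjOn i (φ v) (hi v))))))))
  · obtain ⟨i, hi⟩ := exists_missed (fun v => sidx (φ v)) hcard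
    exact Or.inr (Or.inr (Or.inr (Or.inr (Or.inr (Or.inr (Or.inl
      (embed_of_exists (halfGraphEmb N i) φ
        (fun v => smap_surjOn i (φ v) (hi v)))))))))
  · obtain ⟨i, hi⟩ := exists_missed (fun v => oidx (φ v)) hcard
    exact Or.inr (Or.inr (Or.inr (Or.inr (Or.inr (Or.inr (Or.inr (Or.inl
      (embed_of_exists (HPrimeGEmb N i) φ
        (fun v => omap_surjOn i (φ v) (hi v))))))))))
  · refine Or.inr (Or.inr (Or.inr (Or.inr (Or.inr (Or.inr (Or.inr (Or.inr (Or.inl ?_))))))))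
    by_cases hw : ∃ v, φ v = none
    · obtain ⟨v0, hv0⟩ := hw
      obtain ⟨i, hi0, hi⟩ := exists_missed_ne (fun v => oidx (φ v)) hcard'
        ⟨v0, by simp [hv0, oidx]⟩
      exact embed_of_exists (HStarGEmb N (by omega) i hi0) φ
        (fun v => omap_surjOn i (φ v) (hi v))
    · push_neg at hw
      obtain ⟨φ'⟩ := embed_of_exists (HGtoHStar (N + 1)) φ
        (fun v => Option.ne_none_iff_exists.mp (hw v))
      obtain ⟨i, hi⟩ := exists_missed (fun v => sidx (φ' v)) hcard
      obtain ⟨ψ⟩ := embed_of_exists (HGEmb N i) φ' (fun v => smap_surjOn i (φ' v) (hi v))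
      exact ⟨ψ.trans (HGtoHStar N)⟩
  · refine Or.inr (Or.inr (Or.inr (Or.inr (Or.inr (Or.inr (Or.inr (Or.inr (Or.inr ?_))))))))
    by_cases hw : ∃ v, φ v = none
    · obtain ⟨v0, hv0⟩ := hw
      obtain ⟨i, hi0, hi⟩ := exists_missed_ne (fun v => oidx (φ v)) hcard'
        ⟨v0, by simp [hv0, oidx]⟩
      exact embed_of_exists (embCompl (HStarGEmb N (by omega) i hi0)) φ
        (fun v => omap_surjOn i (φ v) (hi v))
    · push_neg at hw
      obtain ⟨φ'⟩ := embed_of_exists (embCompl (HGtoHStar (N + 1))) φ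
        (fun v => Option.ne_none_iff_exists.mp (hw v))
      obtain ⟨i, hi⟩ := exists_missed (fun v => sidx (φ' v)) hcard
      obtain ⟨ψ⟩ := embed_of_exists (embCompl (HGEmb N i)) φ'
        (fun v => smap_surjOn i (φ' v) (hi v))
      exact ⟨ψ.trans (embCompl (HGtoHStar N))⟩
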